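/- Let Ω be a countable compact Hausdorff topological space, and let E be a Banach space which is a unital Banach module over C(Ω, ℂ) (i.e., ‖e·φ‖ ≤ ‖e‖·‖φ‖ and e·1 = e). For ω ∈ Ω, let K_ω^E denote the closed linear span of { e·φ : e ∈ E, φ ∈ C(Ω,ℂ), φ(ω) = 0 }. Then ⋂_{ω ∈ Ω} K_ω^E = {0}. -/

import Mathlib

open Set ContinuousMap

theorem aux_isolated' {α : Type*} [TopologicalSpace α] [Countable α] [CompactSpace α]
    [T2Space α] [Nonempty α] : ∃ a : α, IsOpen ({a} : Set α) := by
  by_contra h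
  push_neg at h
  have hdense : Dense (⋂ a : α, ({a}ᶜ : Set α)) := by
    refine dense_iInter_of_isOpen (fun a => isClosed_singleton.isOpen_compl) (fun a => ?_)
    rw [dense_compl_singleton_iff_not_open]
    exact h a
  obtain ⟨y, hy⟩ := hdense.nonempty
  simp only [mem_iInter, mem_compl_iff, mem_singleton_iff] at hy
  exact hy y rfl

theorem aux_kill'
    {Ω : Type*} [TopologicalSpace Ω] [CompactSpace Ω] [T2Space Ω]
    {E : Type*} [NormedAddCommGroup E] [NormedSpace ℂ E]
    [Module C(Ω, ℂ) E] [IsScalarTower ℂ C(Ω, ℂ) E]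
    (hnorm : ∀ (φ : C(Ω, ℂ)) (e : E), ‖φ • e‖ ≤ ‖φ‖ * ‖e‖)
    (e : E) (χ : C(Ω, ℂ)) (O : Set Ω) (hO : IsOpen O)
    (hFO : ∀ ω : Ω, (∀ φ : C(Ω, ℂ), φ • e = 0 → φ ω = 0) → ω ∈ O)
    (hχ : ∀ x ∈ O, χ x = 0) : χ • e = 0 := by
  classical
  set K : Set Ω := Oᶜ with hKdef
  have hKc : IsCompact K := hO.isClosed_compl.isCompact
  have hK : ∀ ω : K, ∃ φ : C(Ω, ℂ), φ • e = 0 ∧ φ (ω : Ω) ≠ 0 := by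
    rintro ⟨ω, hω⟩
    by_contra hcon
    push_neg at hcon
    exact hω (hFO ω (fun φ hφ => hcon φ hφ))
  choose p hp1 hp2 using hK
  rcases K.eq_empty_or_nonempty with hKe | hne
  · have : χ = 0 := by
      ext x
      have hx : x ∈ O := by
        by_contra hx
        exact absurd (show x ∈ K from hx) (by simp [hKe])
      simp [hχ x hx]
    rw [this, zero_smul]
  · obtain ⟨t, ht⟩ := hKc.elim_finite_subcover (fun i : K => {x | p i x ≠ 0})
      (fun i => isOpen_ne.preimage (p i).continuous)
      (fun x hx => mem_iUnion.2 ⟨⟨x, hx⟩, hp2 ⟨x, hx⟩⟩)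
    set g : C(Ω, ℂ) := ∑ i ∈ t, star (p i) * p i with hgdef
    have hge : g • e = 0 := by
      rw [hgdef, Finset.sum_smul]
      refine Finset.sum_eq_zero (fun i _ => ?_)
      rw [mul_smul, hp1 i, smul_zero]
    set r : Ω → ℝ := fun x => ∑ i ∈ t, Complex.normSq (p i x) with hrdef
    have hr : Continuous r := by
      apply continuous_finset_sum
      intro i _
      exact Complex.continuous_normSq.comp (p i).continuous
    have hgr : ∀ x, g x = (r x : ℂ) := by
      intro x
      simp only [hgdef, hrdef, ContinuousMap.coe_sum, Finset.sum_apply, ContinuousMap.mul_apply,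
        ContinuousMap.star_apply, Complex.ofReal_sum]
      refine Finset.sum_congr rfl (fun i _ => ?_)
      rw [Complex.star_def, Complex.normSq_eq_conj_mul_self]
    have hr0 : ∀ x, 0 ≤ r x := fun x =>
      Finset.sum_nonneg (fun i _ => Complex.normSq_nonneg _)
    obtain ⟨x₀, hx₀K, hx₀min⟩ := hKc.exists_isMinOn hne hr.continuousOn
    set c : ℝ := r x₀ with hcdef
    have hc : 0 < c := by
      have := ht hx₀K
      simp only [mem_iUnion] at this
      obtain ⟨i, hi, hpi⟩ := this
      refine Finset.sum_pos' (fun j _ => Complex.normSq_nonneg _) ⟨i, hi, ?_⟩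
      exact Complex.normSq_pos.2 hpi
    have hrK : ∀ x ∈ K, c ≤ r x := fun x hx => hx₀min hx
    have key : ∀ ε : ℝ, 0 < ε → ‖χ • e‖ ≤ ε := by
      intro ε hε
      obtain ⟨n, hn⟩ := exists_nat_gt ((‖χ‖ * ‖e‖) / (ε * c))
      have hden : ∀ x, (1 : ℂ) + n * g x ≠ 0 := by
        intro x
        rw [hgr]
        have : ((1 + n * r x : ℝ) : ℂ) ≠ 0 := by
          rw [Complex.ofReal_ne_zero]
          nlinarith [mul_nonneg (Nat.cast_nonneg (α := ℝ) n) (hr0 x)]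
        convert this using 1
        push_cast
        ring
      set v : C(Ω, ℂ) := ⟨fun x => (n : ℂ) / (1 + n * g x), by
        refine continuous_const.div ?_ hden
        exact continuous_const.add (continuous_const.mul g.continuous)⟩ with hvdef
      set q : C(Ω, ℂ) := χ * v * g with hqdef
      have hq : q • e = 0 := by
        rw [hqdef, mul_smul, hge, smul_zero]
      have hsub : χ • e = (χ - q) • e := by
        rw [sub_smul, hq, sub_zero]
      have hnormsub : ‖χ - q‖ ≤ ‖χ‖ / (1 + n * c) := by
        have h1nc : (0:ℝ) < 1 + n * c := by positivity
        rw [ContinuousMap.norm_le _ (by positivity)]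
        intro x
        have hval : (χ - q) x = χ x / (1 + n * g x) := by
          have hd := hden x
          simp only [hqdef, ContinuousMap.sub_apply, ContinuousMap.mul_apply, hvdef,
            ContinuousMap.coe_mk]
          field_simp
          ring
        rw [hval]
        by_cases hx : x ∈ O
        · rw [hχ x hx]
          simp only [zero_div, norm_zero]
          positivity
        · have hxK : x ∈ K := hx
          rw [norm_div]
          have habs : ‖(1 : ℂ) + n * g x‖ = 1 + n * r x := by
            rw [hgr]
            have : (1 : ℂ) + n * (r x : ℂ) = ((1 + n * r x : ℝ) : ℂ) := by push_cast; ring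
            rw [this, Complex.norm_real, Real.norm_of_nonneg (by nlinarith [mul_nonneg (Nat.cast_nonneg (α := ℝ) n) (hr0 x)])]
          rw [habs]
          apply div_le_div₀ (norm_nonneg χ) (χ.norm_coe_le_norm x) h1nc
          have := hrK x hxK
          nlinarith [Nat.cast_nonneg (α := ℝ) n]
      rw [hsub]
      calc ‖(χ - q) • e‖ ≤ ‖χ - q‖ * ‖e‖ := hnorm _ _
        _ ≤ (‖χ‖ / (1 + n * c)) * ‖e‖ := by
            apply mul_le_mul_of_nonneg_right hnormsub (norm_nonneg e)
        _ ≤ ε := by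
            rw [div_mul_eq_mul_div, div_le_iff₀ (by positivity)]
            have h2 : ‖χ‖ * ‖e‖ ≤ n * (ε * c) := by
              rcases le_or_gt (‖χ‖ * ‖e‖) 0 with h | h
              · have : (0:ℝ) ≤ n * (ε * c) := by positivity
                linarith
              · rw [div_lt_iff₀ (by positivity)] at hn
                linarith
            nlinarith [hε.le]
    have h0 : ‖χ • e‖ ≤ 0 := le_of_forall_pos_le_add (by intro ε hε; simpa using key ε hε)
    exact norm_le_zero_iff.mp h0

set_option maxHeartbeats 2000000 in
theorem stmt_3
    {Ω : Type*} [TopologicalSpace Ω] [CompactSpace Ω] [T2Space Ω] [Countable Ω]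
    {E : Type*} [NormedAddCommGroup E] [NormedSpace ℂ E] [CompleteSpace E]
    [Module C(Ω, ℂ) E] [IsScalarTower ℂ C(Ω, ℂ) E]
    (hnorm : ∀ (φ : C(Ω, ℂ)) (e : E), ‖φ • e‖ ≤ ‖φ‖ * ‖e‖)
    (e : E)
    (he : ∀ ω : Ω, e ∈ closure (Submodule.span ℂ
      {x : E | ∃ (φ : C(Ω, ℂ)) (e' : E), φ ω = 0 ∧ x = φ • e'} : Set E)) :
    e = 0 := by
  classical
  set F : Set Ω := {ω | ∀ φ : C(Ω, ℂ), φ • e = 0 → φ ω = 0} with hF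
  rcases F.eq_empty_or_nonempty with hFe | hFne
  · have h1 : (1 : C(Ω, ℂ)) • e = 0 := by
      apply aux_kill' hnorm e 1 ∅ isOpen_empty
      · intro ω hω
        exact absurd (show ω ∈ F from hω) (by simp [hFe])
      · intro x hx; exact absurd hx (notMem_empty x)
    rwa [one_smul] at h1
  · exfalso
    have hFclosed : IsClosed F := by
      have : F = ⋂ φ ∈ {φ : C(Ω, ℂ) | φ • e = 0}, φ ⁻¹' {0} := by
        ext ω
        simp [hF]
      rw [this]
      exact isClosed_biInter (fun φ _ => isClosed_singleton.preimage φ.continuous)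
    haveI : CompactSpace F := isCompact_iff_compactSpace.mp hFclosed.isCompact
    haveI : Nonempty F := hFne.to_subtype
    obtain ⟨a, ha⟩ := aux_isolated' (α := F)
    obtain ⟨U, hUopen, hUa⟩ := isOpen_induced_iff.mp ha
    set ω₀ : Ω := (a : Ω) with hω₀
    have hω₀F : ω₀ ∈ F := a.2
    have hω₀U : ω₀ ∈ U := by
      have : a ∈ Subtype.val ⁻¹' U := by rw [hUa]; exact rfl
      exact this
    have hUF : ∀ ω ∈ F, ω ∈ U → ω = ω₀ := by
      intro ω hωF hωU
      have h1 : (⟨ω, hωF⟩ : F) ∈ Subtype.val ⁻¹' U := hωU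
      rw [hUa] at h1
      exact congrArg Subtype.val h1
    obtain ⟨V, hVopen, hV₀, hVU⟩ := normal_exists_closure_subset
      (isClosed_singleton (x := ω₀)) hUopen (singleton_subset_iff.2 hω₀U)
    have hω₀V : ω₀ ∈ V := hV₀ rfl
    obtain ⟨f, hf0, hf1, hf01⟩ := exists_continuous_zero_one_of_isClosed
      hVopen.isClosed_compl (isClosed_singleton (x := ω₀))
      (disjoint_singleton_right.2 (fun h => h hω₀V))
    set ψ : C(Ω, ℂ) := ⟨fun x => (f x : ℂ), Complex.continuous_ofReal.comp f.continuous⟩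
      with hψdef
    have hψ0 : ∀ x ∈ Vᶜ, ψ x = 0 := by
      intro x hx
      simp only [hψdef, ContinuousMap.coe_mk]
      rw [hf0 hx]
      simp
    have hψ1 : ψ ω₀ = 1 := by
      simp only [hψdef, ContinuousMap.coe_mk]
      rw [hf1 rfl]
      simp
    have hψle : ∀ x, ‖ψ x‖ ≤ 1 := by
      intro x
      simp only [hψdef, ContinuousMap.coe_mk, Complex.norm_real]
      rw [Real.norm_eq_abs, abs_of_nonneg (hf01 x).1]
      exact (hf01 x).2
    have hψe : ψ • e = 0 := by
      have key : ∀ ε : ℝ, 0 < ε → ‖ψ • e‖ ≤ ε := by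
        intro ε hε
        obtain ⟨x, hxmem, hxdist⟩ := Metric.mem_closure_iff.mp (he ω₀) (ε/2) (by positivity)
        rw [SetLike.mem_coe, Submodule.mem_span_set'] at hxmem
        obtain ⟨n, cf, gf, hsum⟩ := hxmem
        have hgs : ∀ i : Fin n, ∃ (φ : C(Ω, ℂ)) (v : E), φ ω₀ = 0 ∧ (gf i : E) = φ • v :=
          fun i => (gf i).2
        choose φs vs hφs hvs using hgs
        set Φ : Fin n → C(Ω, ℂ) := fun i => cf i • φs i with hΦdef
        have hΦ0 : ∀ i, Φ i ω₀ = 0 := by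
          intro i
          simp [hΦdef, hφs i]
        have hxrep : x = ∑ i, Φ i • vs i := by
          rw [← hsum]
          refine Finset.sum_congr rfl (fun i _ => ?_)
          rw [hvs i, hΦdef, smul_assoc]
        set M : ℝ := ∑ i, ‖vs i‖ with hMdef
        have hM0 : 0 ≤ M := Finset.sum_nonneg (fun i _ => norm_nonneg _)
        set δ : ℝ := (ε/2) / (M + 1) with hδdef
        have hδ : 0 < δ := by positivity
        set N : Set Ω := ⋂ i, {y | ‖Φ i y‖ < δ} with hNdef
        have hNopen : IsOpen N :=
          isOpen_iInter_of_finite (fun i =>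
            isOpen_lt ((Φ i).continuous.norm) continuous_const)
        have hω₀N : ω₀ ∈ N := by
          simp only [hNdef, mem_iInter, mem_setOf_eq]
          intro i
          rw [hΦ0 i]
          simpa using hδ
        obtain ⟨W, hWopen, hW₀, hWN⟩ := normal_exists_closure_subset
          (isClosed_singleton (x := ω₀)) hNopen (singleton_subset_iff.2 hω₀N)
        obtain ⟨fθ, hθ0, hθ1, hθ01⟩ := exists_continuous_zero_one_of_isClosed
          hNopen.isClosed_compl isClosed_closure
          (disjoint_compl_left.mono_right hWN)
        set θ : C(Ω, ℂ) := ⟨fun y => (fθ y : ℂ), Complex.continuous_ofReal.comp fθ.continuous⟩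
          with hθdef
        have hθle : ∀ y, ‖θ y‖ ≤ 1 := by
          intro y
          simp only [hθdef, ContinuousMap.coe_mk, Complex.norm_real]
          rw [Real.norm_eq_abs, abs_of_nonneg (hθ01 y).1]
          exact (hθ01 y).2
        have hsplit : ψ • e = (θ * ψ) • e + ((1 - θ) * ψ) • e := by
          rw [← add_smul]
          congr 1
          ring
        have hkill : ((1 - θ) * ψ) • e = 0 := by
          apply aux_kill' hnorm e _ (W ∪ (closure V)ᶜ)
            (hWopen.union isClosed_closure.isOpen_compl)
          · intro ω hω
            by_cases hv : ω ∈ closure V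
            · left
              have : ω = ω₀ := hUF ω hω (hVU hv)
              rw [this]
              exact hW₀ rfl
            · right; exact hv
          · rintro y (hy | hy)
            · have : fθ y = 1 := hθ1 (subset_closure hy)
              simp only [ContinuousMap.mul_apply, ContinuousMap.sub_apply,
                ContinuousMap.one_apply, hθdef, ContinuousMap.coe_mk, this]
              simp
            · have hyV : y ∈ Vᶜ := fun hyv => hy (subset_closure hyv)
              simp only [ContinuousMap.mul_apply]
              rw [hψ0 y hyV, mul_zero]
        rw [hsplit, hkill, add_zero]
        have hdecomp : (θ * ψ) • e = (θ * ψ) • (e - x) + ∑ i, ((θ * ψ) * Φ i) • vs i := by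
          have h1 : (θ * ψ) • x = ∑ i, ((θ * ψ) * Φ i) • vs i := by
            rw [hxrep, Finset.smul_sum]
            refine Finset.sum_congr rfl (fun i _ => ?_)
            rw [← mul_smul]
          rw [← h1, smul_sub]
          abel
        rw [hdecomp]
        have hθψ : ‖θ * ψ‖ ≤ 1 := by
          rw [ContinuousMap.norm_le _ zero_le_one]
          intro y
          rw [ContinuousMap.mul_apply, norm_mul]
          nlinarith [hθle y, hψle y, norm_nonneg (θ y), norm_nonneg (ψ y)]
        have hterm : ∀ i : Fin n, ‖((θ * ψ) * Φ i) • vs i‖ ≤ δ * ‖vs i‖ := by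
          intro i
          refine le_trans (hnorm _ _) (mul_le_mul_of_nonneg_right ?_ (norm_nonneg _))
          rw [ContinuousMap.norm_le _ hδ.le]
          intro y
          by_cases hy : y ∈ N
          · have hΦy : ‖Φ i y‖ < δ := by
              have h2 := mem_iInter.mp hy i
              exact h2
            rw [ContinuousMap.mul_apply, ContinuousMap.mul_apply, norm_mul, norm_mul]
            have hab : ‖θ y‖ * ‖ψ y‖ ≤ 1 := by
              nlinarith [hθle y, hψle y, norm_nonneg (θ y), norm_nonneg (ψ y)]
            calc ‖θ y‖ * ‖ψ y‖ * ‖(Φ i) y‖ ≤ 1 * ‖(Φ i) y‖ :=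
                  mul_le_mul_of_nonneg_right hab (norm_nonneg _)
              _ ≤ δ := by rw [one_mul]; exact hΦy.le
          · have hθy : θ y = 0 := by
              have h3 : fθ y = 0 := hθ0 hy
              simp [hθdef, h3]
            rw [ContinuousMap.mul_apply, ContinuousMap.mul_apply, hθy, zero_mul, zero_mul,
              norm_zero]
            exact hδ.le
        have hex : ‖e - x‖ ≤ ε / 2 := by
          rw [← dist_eq_norm]
          exact hxdist.le
        have hδM : δ * M + δ = ε / 2 := by
          rw [hδdef]
          field_simp
        calc ‖(θ * ψ) • (e - x) + ∑ i, ((θ * ψ) * Φ i) • vs i‖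
            ≤ ‖(θ * ψ) • (e - x)‖ + ‖∑ i, ((θ * ψ) * Φ i) • vs i‖ := norm_add_le _ _
          _ ≤ ‖θ * ψ‖ * ‖e - x‖ + ∑ i, (δ * ‖vs i‖) :=
              add_le_add (hnorm _ _) (le_trans (norm_sum_le _ _)
                (Finset.sum_le_sum (fun i _ => hterm i)))
          _ = ‖θ * ψ‖ * ‖e - x‖ + δ * M := by rw [hMdef, Finset.mul_sum]
          _ ≤ 1 * (ε / 2) + δ * M :=
              add_le_add_left (mul_le_mul hθψ hex (norm_nonneg _) zero_le_one) _
          _ ≤ ε := by nlinarith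
      have h0 : ‖ψ • e‖ ≤ 0 := le_of_forall_pos_le_add (by intro ε hε; simpa using key ε hε)
      exact norm_le_zero_iff.mp h0
    exact one_ne_zero (hψ1 ▸ hω₀F ψ hψe)
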